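/- Let H ∈ R^{N×N} be symmetric positive definite, γ ∈ R^N, and η > 0 satisfy η(λ_1(H) + 2γ_i) < 2 for all i, where λ_1(H) is the largest eigenvalue of H. Then the matrix M_η = I_N - η (I_N - η diag(γ))^{-1} H has spectral radius strictly less than 1. -/

import Mathlib

open Matrix

/-- `μ : ℂ` is an eigenvalue of the real matrix `A`. -/
def IsEigOf {n : Type*} [Fintype n] [DecidableEq n] (A : Matrix n n ℝ) (μ : ℂ) : Prop :=
  ∃ v : n → ℂ, v ≠ 0 ∧ (A.map (fun x => (x : ℂ))) *ᵥ v = μ • v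

/-- Spectral radius: the supremum of moduli of (complex) eigenvalues. -/
noncomputable def specRad {n : Type*} [Fintype n] [DecidableEq n] (A : Matrix n n ℝ) : ℝ :=
  sSup {r : ℝ | ∃ μ : ℂ, IsEigOf A μ ∧ r = ‖μ‖}

lemma quad_diag {n : Type*} [Fintype n] [DecidableEq n] (c : n → ℝ) (u : n → ℂ) :
    star u ⬝ᵥ ((Matrix.diagonal (fun i => (c i : ℂ))) *ᵥ u)
      = ((∑ i, c i * Complex.normSq (u i) : ℝ) : ℂ) := by
  simp only [dotProduct, Matrix.mulVec_diagonal, Pi.star_apply, Complex.ofReal_sum,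
    Complex.star_def]
  refine Finset.sum_congr rfl fun i _ => ?_
  rw [Complex.ofReal_mul, Complex.normSq_eq_conj_mul_self]
  ring

lemma dot_star_self {n : Type*} [Fintype n] (u : n → ℂ) :
    star u ⬝ᵥ u = ((∑ i, Complex.normSq (u i) : ℝ) : ℂ) := by
  simp only [dotProduct, Pi.star_apply, Complex.ofReal_sum, Complex.star_def]
  refine Finset.sum_congr rfl fun i _ => ?_
  rw [Complex.normSq_eq_conj_mul_self]

set_option maxHeartbeats 1000000 in
theorem specRad_M_lt_one {N : ℕ} (H : Matrix (Fin (N + 1)) (Fin (N + 1)) ℝ)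
    (hH : H.PosDef) (γ : Fin (N + 1) → ℝ) (η : ℝ) (hη : 0 < η)
    (hstep : ∀ i, η * ((⨆ j, hH.1.eigenvalues j) + 2 * γ i) < 2) :
    specRad ((1 : Matrix (Fin (N + 1)) (Fin (N + 1)) ℝ) -
        η • ((1 - η • Matrix.diagonal γ)⁻¹ * H)) < 1 := by
  classical
  set lam : Fin (N + 1) → ℝ := hH.1.eigenvalues with hlam_def
  set lam1 : ℝ := ⨆ j, lam j with hlam1_def
  have hbddlam : BddAbove (Set.range lam) := (Set.finite_range lam).bddAbove
  have hlam_le : ∀ i, lam i ≤ lam1 := fun i => le_ciSup hbddlam i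
  have hlam_pos : ∀ i, 0 < lam i := fun i => hH.eigenvalues_pos i
  have hlam1_pos : 0 < lam1 := lt_of_lt_of_le (hlam_pos 0) (hlam_le 0)
  set d : Fin (N + 1) → ℝ := fun i => 1 - η * γ i with hd_def
  have hd2 : ∀ i, η * lam1 / 2 < d i := by
    intro i
    have := hstep i
    simp only [hd_def]
    nlinarith
  have hdpos : ∀ i, 0 < d i := fun i => lt_of_le_of_lt (by positivity) (hd2 i)
  have hdne : ∀ i, d i ≠ 0 := fun i => (hdpos i).ne'
  -- extremal constants
  have hne : (Finset.univ : Finset (Fin (N + 1))).Nonempty := Finset.univ_nonempty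
  set dmin : ℝ := Finset.univ.inf' hne d with hdmin_def
  set dmax : ℝ := Finset.univ.sup' hne d with hdmax_def
  set lmin : ℝ := Finset.univ.inf' hne lam with hlmin_def
  have hdmin_pos : 0 < dmin := (Finset.lt_inf'_iff hne).mpr fun i _ => hdpos i
  have hdmin_le : ∀ i, dmin ≤ d i := fun i => Finset.inf'_le d (Finset.mem_univ i)
  have hdmax_le : ∀ i, d i ≤ dmax := fun i => Finset.le_sup' d (Finset.mem_univ i)
  have hdmax_pos : 0 < dmax := lt_of_lt_of_le hdmin_pos (le_trans (hdmin_le 0) (hdmax_le 0))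
  have hlmin_pos : 0 < lmin := (Finset.lt_inf'_iff hne).mpr fun i _ => hlam_pos i
  have hlmin_le : ∀ i, lmin ≤ lam i := fun i => Finset.inf'_le lam (Finset.mem_univ i)
  have hlmin_le1 : lmin ≤ lam1 := le_trans (hlmin_le 0) (hlam_le 0)
  have hdmin_gt : η * lam1 / 2 < dmin := (Finset.lt_inf'_iff hne).mpr fun i _ => hd2 i
  set a : ℝ := η * lmin / dmax with ha_def
  set b : ℝ := η * lam1 / dmin with hb_def
  set c : ℝ := max (1 - a) (b - 1) with hc_def
  have ha_pos : 0 < a := by positivity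
  have hab : a ≤ b := by
    apply div_le_div₀ (by positivity) (by nlinarith) hdmin_pos (le_trans (hdmin_le 0) (hdmax_le 0))
  have hb2 : b < 2 := by
    rw [hb_def, div_lt_iff₀ hdmin_pos]
    nlinarith
  have hc1 : c < 1 := max_lt (by linarith) (by linarith)
  have hc0 : 0 ≤ c := by
    rcases le_or_gt a 1 with h | h
    · exact le_trans (by linarith) (le_max_left _ _)
    · exact le_trans (by linarith) (le_max_right _ _)
  -- inverse of the diagonal matrix
  have hDinv : ((1 : Matrix (Fin (N + 1)) (Fin (N + 1)) ℝ) - η • Matrix.diagonal γ)⁻¹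
      = Matrix.diagonal (fun i => (d i)⁻¹) := by
    have h1 : (1 : Matrix (Fin (N + 1)) (Fin (N + 1)) ℝ) - η • Matrix.diagonal γ
        = Matrix.diagonal d := by
      ext i j
      by_cases h : i = j <;> simp [h, Matrix.diagonal_apply, Matrix.one_apply, hd_def]
    rw [h1]
    apply Matrix.inv_eq_right_inv
    rw [Matrix.diagonal_mul_diagonal,
      show (fun i => d i * (d i)⁻¹) = fun _ => (1 : ℝ) from
        funext fun i => mul_inv_cancel₀ (hdne i), Matrix.diagonal_one]
  refine lt_of_le_of_lt (Real.sSup_le ?_ hc0) hc1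
  rintro r ⟨μ, ⟨v, hv0, hv⟩, rfl⟩
  -- notation for complex matrices
  set Hc : Matrix (Fin (N + 1)) (Fin (N + 1)) ℂ := H.map (fun x => (x : ℂ)) with hHc_def
  set Dc : Matrix (Fin (N + 1)) (Fin (N + 1)) ℂ :=
    Matrix.diagonal (fun i => (d i : ℂ)) with hDc_def
  set Dinvc : Matrix (Fin (N + 1)) (Fin (N + 1)) ℂ :=
    Matrix.diagonal (fun i => ((d i)⁻¹ : ℂ)) with hDinvc_def
  have hmap : ((1 : Matrix (Fin (N + 1)) (Fin (N + 1)) ℝ) -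
      η • ((1 - η • Matrix.diagonal γ)⁻¹ * H)).map (fun x => (x : ℂ))
      = 1 - (η : ℂ) • (Dinvc * Hc) := by
    rw [hDinv]
    ext i j
    by_cases h : i = j <;>
      simp [h, Matrix.map_apply, Matrix.sub_apply, Matrix.smul_apply, Matrix.one_apply,
        Matrix.diagonal_mul, Matrix.mul_apply, Matrix.diagonal_apply, hHc_def, hDinvc_def,
        Finset.mul_sum]
  rw [hmap] at hv
  have hv' : v - (η : ℂ) • (Dinvc *ᵥ (Hc *ᵥ v)) = μ • v := by
    rw [← hv, Matrix.sub_mulVec, Matrix.one_mulVec, Matrix.smul_mulVec,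
      Matrix.mulVec_mulVec]
  have h2 : (η : ℂ) • (Dinvc *ᵥ (Hc *ᵥ v)) = (1 - μ) • v := by
    rw [sub_smul, one_smul, ← hv']
    abel
  have hDD : Dc * Dinvc = 1 := by
    rw [hDc_def, hDinvc_def, Matrix.diagonal_mul_diagonal]
    ext i j
    rcases eq_or_ne i j with h | h
    · subst h
      simp [Matrix.diagonal_apply_eq, Matrix.one_apply_eq,
        mul_inv_cancel₀ (Complex.ofReal_ne_zero.mpr (hdne i))]
    · simp [Matrix.diagonal_apply_ne _ h, Matrix.one_apply_ne h]
  have h3 : (η : ℂ) • (Hc *ᵥ v) = (1 - μ) • (Dc *ᵥ v) := by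
    have h := congrArg (fun x => Dc *ᵥ x) h2
    simp only [Matrix.mulVec_smul] at h
    rw [Matrix.mulVec_mulVec, hDD, Matrix.one_mulVec] at h
    exact h
  have key : (η : ℂ) * (star v ⬝ᵥ (Hc *ᵥ v)) = (1 - μ) * (star v ⬝ᵥ (Dc *ᵥ v)) := by
    have := congrArg (fun x => star v ⬝ᵥ x) h3
    simpa only [dotProduct_smul, smul_eq_mul] using this
  -- spectral decomposition of H over ℝ, mapped to ℂ
  set U : Matrix (Fin (N + 1)) (Fin (N + 1)) ℝ := (hH.1.eigenvectorUnitary :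
    Matrix (Fin (N + 1)) (Fin (N + 1)) ℝ) with hU_def
  have hspec : H = U * Matrix.diagonal lam * star U := by
    have h := hH.1.spectral_theorem
    simpa [RCLike.ofReal_real_eq_id, Function.comp] using h
  have hmapmul : ∀ (A B : Matrix (Fin (N + 1)) (Fin (N + 1)) ℝ),
      (A * B).map (fun x => (x : ℂ)) = A.map (fun x => (x : ℂ)) * B.map (fun x => (x : ℂ)) := by
    intro A B
    ext i j
    simp [Matrix.map_apply, Matrix.mul_apply]
  set Uc : Matrix (Fin (N + 1)) (Fin (N + 1)) ℂ := U.map (fun x => (x : ℂ)) with hUc_def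
  have hstarmap : (star U).map (fun x => (x : ℂ)) = star Uc := by
    ext i j
    simp [Matrix.map_apply, Matrix.star_apply, hUc_def]
  have hHc_spec : Hc = Uc * Matrix.diagonal (fun i => (lam i : ℂ)) * star Uc := by
    rw [hHc_def, hspec]
    rw [hmapmul, hmapmul, hstarmap]
    congr 1
    rw [Matrix.diagonal_map (by simp)]
  have hUU : U * star U = 1 := (Matrix.mem_unitaryGroup_iff).mp hH.1.eigenvectorUnitary.2
  have hUcUc : Uc * star Uc = 1 := by
    rw [hUc_def, ← hstarmap, ← hmapmul, hUU, Matrix.map_one _ Complex.ofReal_zero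
      Complex.ofReal_one]
  set w : Fin (N + 1) → ℂ := star Uc *ᵥ v with hw_def
  have hwstar : star w = star v ᵥ* Uc := by
    rw [hw_def, Matrix.star_mulVec, Matrix.star_eq_conjTranspose, Matrix.conjTranspose_conjTranspose]
  have hdotU : ∀ x : Fin (N + 1) → ℂ, star v ⬝ᵥ (Uc *ᵥ x) = star w ⬝ᵥ x := by
    intro x
    rw [hwstar, Matrix.dotProduct_mulVec]
  -- quadratic forms
  set s : ℝ := ∑ i, Complex.normSq (v i) with hs_def
  set pr : ℝ := ∑ i, lam i * Complex.normSq (w i) with hpr_def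
  set qr : ℝ := ∑ i, d i * Complex.normSq (v i) with hqr_def
  have hp : star v ⬝ᵥ (Hc *ᵥ v) = (pr : ℂ) := by
    rw [hHc_spec, ← Matrix.mulVec_mulVec, ← Matrix.mulVec_mulVec, hdotU, ← hw_def,
      quad_diag]
  have hq : star v ⬝ᵥ (Dc *ᵥ v) = (qr : ℂ) := quad_diag d v
  have hsw : ∑ i, Complex.normSq (w i) = s := by
    have h1 : star w ⬝ᵥ w = star v ⬝ᵥ v := by
      rw [hwstar, hw_def, Matrix.dotProduct_mulVec, Matrix.vecMul_vecMul, hUcUc,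
        Matrix.vecMul_one]
    rw [dot_star_self, dot_star_self] at h1
    exact_mod_cast h1
  have hs_pos : 0 < s := by
    obtain ⟨i, hi⟩ := Function.ne_iff.mp hv0
    exact Finset.sum_pos' (fun j _ => Complex.normSq_nonneg _)
      ⟨i, Finset.mem_univ i, Complex.normSq_pos.mpr hi⟩
  -- bounds on pr, qr
  have hpr_le : pr ≤ lam1 * s := by
    rw [hpr_def, ← hsw, Finset.mul_sum]
    exact Finset.sum_le_sum fun i _ =>
      mul_le_mul_of_nonneg_right (hlam_le i) (Complex.normSq_nonneg _)
  have hpr_ge : lmin * s ≤ pr := by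
    rw [hpr_def, ← hsw, Finset.mul_sum]
    exact Finset.sum_le_sum fun i _ =>
      mul_le_mul_of_nonneg_right (hlmin_le i) (Complex.normSq_nonneg _)
  have hqr_le : qr ≤ dmax * s := by
    rw [hqr_def, hs_def, Finset.mul_sum]
    exact Finset.sum_le_sum fun i _ =>
      mul_le_mul_of_nonneg_right (hdmax_le i) (Complex.normSq_nonneg _)
  have hqr_ge : dmin * s ≤ qr := by
    rw [hqr_def, hs_def, Finset.mul_sum]
    exact Finset.sum_le_sum fun i _ =>
      mul_le_mul_of_nonneg_right (hdmin_le i) (Complex.normSq_nonneg _)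
  have hqr_pos : 0 < qr := lt_of_lt_of_le (mul_pos hdmin_pos hs_pos) hqr_ge
  -- identify μ
  rw [hp, hq] at key
  set t : ℝ := η * pr / qr with ht_def
  have hμ : μ = ((1 - t : ℝ) : ℂ) := by
    have hq0 : (qr : ℂ) ≠ 0 := Complex.ofReal_ne_zero.mpr hqr_pos.ne'
    rw [ht_def]
    push_cast
    field_simp
    linear_combination key
  have ht_ge : a ≤ t := by
    rw [ht_def, ha_def]
    rw [show η * lmin / dmax = η * lmin * s / (dmax * s) by
      rw [mul_div_mul_right _ _ hs_pos.ne']]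
    apply div_le_div₀ (mul_nonneg hη.le (le_trans (mul_nonneg hlmin_pos.le hs_pos.le) hpr_ge))
      (by rw [mul_assoc]; exact mul_le_mul_of_nonneg_left hpr_ge hη.le) hqr_pos hqr_le
  have ht_le : t ≤ b := by
    rw [ht_def, hb_def]
    rw [show η * lam1 / dmin = η * lam1 * s / (dmin * s) by
      rw [mul_div_mul_right _ _ hs_pos.ne']]
    apply div_le_div₀ (mul_nonneg (mul_nonneg hη.le hlam1_pos.le) hs_pos.le)
      (by rw [mul_assoc]; exact mul_le_mul_of_nonneg_left hpr_le hη.le)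
      (mul_pos hdmin_pos hs_pos) hqr_ge
  rw [hμ, Complex.norm_real, Real.norm_eq_abs]
  have h1a : 1 - a ≤ c := le_max_left _ _
  have hb1 : b - 1 ≤ c := le_max_right _ _
  rw [abs_le]
  constructor <;> linarith
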